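/- Let β, γ, μ, ε > 0 and α ∈ (0,1) satisfy (βγ/μ + (1-α))·(γμ/ε + 1) > 1. Then the matrix A⁻ = [[-γβ, -(1/2)γαμ - ε, -(1/2)γαμ], [β, (1/2)αμ, (1/2)αμ], [β, (1/2)(α-2)μ, (1/2)(α-2)μ]] is Hurwitz. -/

import Mathlib

/-- Routh–Hurwitz for a cubic: if a,b,c > 0 and ab > c, every complex root of
    z³ + a z² + b z + c has negative real part. -/
lemma cubic_root_re_neg (a b c : ℝ) (ha : 0 < a) (hb : 0 < b) (hc : 0 < c)
    (hab : c < a * b) (z : ℂ)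
    (hz : z ^ 3 + (a : ℂ) * z ^ 2 + (b : ℂ) * z + (c : ℂ) = 0) : z.re < 0 := by
  set x := z.re with hx
  set y := z.im with hy
  have hre : x ^ 3 - 3 * x * y ^ 2 + a * (x ^ 2 - y ^ 2) + b * x + c = 0 := by
    have := congrArg Complex.re hz
    simp [pow_succ, Complex.mul_re, Complex.mul_im, Complex.add_re, Complex.add_im,
      Complex.ofReal_re, Complex.ofReal_im, ← hx, ← hy] at this
    nlinarith [this]
  have him : y * (3 * x ^ 2 - y ^ 2 + 2 * a * x + b) = 0 := by
    have := congrArg Complex.im hz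
    simp [pow_succ, Complex.mul_re, Complex.mul_im, Complex.add_re, Complex.add_im,
      Complex.ofReal_re, Complex.ofReal_im, ← hx, ← hy] at this
    nlinarith [this]
  by_contra hxe
  push_neg at hxe
  rcases mul_eq_zero.mp him with hy0 | hq
  · rw [hy0] at hre
    nlinarith [hre, pow_nonneg hxe 3, mul_nonneg (mul_nonneg ha.le hxe) hxe,
      mul_nonneg hb.le hxe]
  · have hy2 : y ^ 2 = 3 * x ^ 2 + 2 * a * x + b := by nlinarith [hq]
    nlinarith [hre, hy2, hab, mul_nonneg hxe (sq_nonneg (2 * x + a)),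
      mul_nonneg hxe hb.le]

theorem Aminus_hurwitz (α β γ μ ε : ℝ) (hβ : 0 < β) (hγ : 0 < γ) (hμ : 0 < μ)
    (hε : 0 < ε) (hα : α ∈ Set.Ioo (0:ℝ) 1)
    (hcond : (β*γ/μ + (1-α)) * (γ*μ/ε + 1) > 1) :
    ∀ z ∈ spectrum ℂ
      ((!![-γ*β, -(1/2)*γ*α*μ - ε, -(1/2)*γ*α*μ;
           β, (1/2)*α*μ, (1/2)*α*μ;
           β, (1/2)*(α-2)*μ, (1/2)*(α-2)*μ] : Matrix (Fin 3) (Fin 3) ℝ).map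
        (Complex.ofReal)),
      z.re < 0 := by
  intro z hz
  obtain ⟨hα0, hα1⟩ := hα
  set M := ((!![-γ*β, -(1/2)*γ*α*μ - ε, -(1/2)*γ*α*μ;
           β, (1/2)*α*μ, (1/2)*α*μ;
           β, (1/2)*(α-2)*μ, (1/2)*(α-2)*μ] : Matrix (Fin 3) (Fin 3) ℝ).map
        (Complex.ofReal)) with hM
  have hnu : ¬ IsUnit (algebraMap ℂ (Matrix (Fin 3) (Fin 3) ℂ) z - M) :=
    spectrum.mem_iff.mp hz
  have hdet : (algebraMap ℂ (Matrix (Fin 3) (Fin 3) ℂ) z - M).det = 0 := by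
    by_contra hne
    exact hnu ((Matrix.isUnit_iff_isUnit_det _).mpr (isUnit_iff_ne_zero.mpr hne))
  rw [hM] at hdet
  simp [Matrix.det_fin_three, Matrix.algebraMap_matrix_apply, Matrix.vecHead, Matrix.vecTail] at hdet
  have key : z ^ 3 + ((γ * β + (1 - α) * μ : ℝ) : ℂ) * z ^ 2
      + ((β * ε + γ * β * μ : ℝ) : ℂ) * z + ((ε * β * μ : ℝ) : ℂ) = 0 := by
    push_cast
    linear_combination hdet
  have ha : 0 < γ * β + (1 - α) * μ := by nlinarith
  have hb : 0 < β * ε + γ * β * μ := by positivity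
  have hc : 0 < ε * β * μ := by positivity
  have hcond' : μ * ε < (β * γ + (1 - α) * μ) * (γ * μ + ε) := by
    have h1 : (β*γ/μ + (1-α)) * (γ*μ/ε + 1) * (μ * ε) > 1 * (μ * ε) := by
      have : (0:ℝ) < μ * ε := by positivity
      exact mul_lt_mul_of_pos_right hcond this
    have h2 : (β*γ/μ + (1-α)) * (γ*μ/ε + 1) * (μ * ε)
        = (β * γ + (1 - α) * μ) * (γ * μ + ε) := by
      field_simp
    nlinarith [h1, h2]
  have hab : ε * β * μ < (γ * β + (1 - α) * μ) * (β * ε + γ * β * μ) := by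
    nlinarith [mul_pos hβ (sub_pos.mpr hcond'), hcond', hβ]
  exact cubic_root_re_neg _ _ _ ha hb hc hab z key
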